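/- arXiv:1709.03931 — 2 statements merged into one kernel-verified Lean document; each statement's English description precedes it below -/
import Mathlib

section
/- Let β, γ, τ > 0 with τ < γ/β², let N ∈ ℕ, and let I₀, I₁, …, I_N be nonnegative real numbers such that β√I₀ ≤ γ and I_k − I_{k−1} ≤ τ(β√(I_k) − γ) for all k = 1, …, N. Then β√(I_k) ≤ γ for all k = 0, …, N, and I_k ≤ I₀ − kτ(γ − β√I₀) for all k = 0, …, N. In particular, if β√I₀ < γ then N ≤ I₀/(τ(γ − β√I₀)). -/
/-- the discrete virial iteration lemma. If `τ < γ/β²`,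
`β√I₀ ≤ γ` and `I_k − I_{k−1} ≤ τ(β√I_k − γ)` for `k = 1, …, N`, then
`β√I_k ≤ γ` and `I_k ≤ I₀ − kτ(γ − β√I₀)` for all `k ≤ N`; in particular, if
`β√I₀ < γ`, then `N ≤ I₀/(τ(γ − β√I₀))`. -/
theorem discrete_virial_iteration (β γ τ : ℝ) (hβ : 0 < β) (hγ : 0 < γ)
    (hτ : 0 < τ) (hτsmall : τ < γ / β ^ 2) (N : ℕ) (I : ℕ → ℝ)
    (hInn : ∀ k : ℕ, k ≤ N → 0 ≤ I k)
    (h0 : β * Real.sqrt (I 0) ≤ γ)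
    (hrec : ∀ k : ℕ, 1 ≤ k → k ≤ N →
      I k - I (k - 1) ≤ τ * (β * Real.sqrt (I k) - γ)) :
    (∀ k : ℕ, k ≤ N → β * Real.sqrt (I k) ≤ γ) ∧
    (∀ k : ℕ, k ≤ N → I k ≤ I 0 - k * τ * (γ - β * Real.sqrt (I 0))) ∧
    (β * Real.sqrt (I 0) < γ →
      (N : ℝ) ≤ I 0 / (τ * (γ - β * Real.sqrt (I 0)))) := by
  have hτβ : τ * β ^ 2 < γ := (lt_div_iff₀ (by positivity)).mp hτsmall
  have hγ0 : 0 ≤ γ - β * Real.sqrt (I 0) := by linarith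
  have key : ∀ k : ℕ, k ≤ N →
      β * Real.sqrt (I k) ≤ γ ∧
      I k ≤ I 0 - k * τ * (γ - β * Real.sqrt (I 0)) := by
    intro k
    induction k with
    | zero => intro _; exact ⟨h0, by simp⟩
    | succ n ih =>
      intro hk
      have hn : n ≤ N := Nat.le_of_succ_le hk
      obtain ⟨ih1, ih2⟩ := ih hn
      have hrecn := hrec (n + 1) (by omega) hk
      simp only [Nat.add_sub_cancel] at hrecn
      have hIn := hInn n hn
      have hIn1 := hInn (n + 1) hk
      have hs := Real.sqrt_nonneg (I (n + 1))
      have ht := Real.sqrt_nonneg (I n)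
      have hsq : Real.sqrt (I (n + 1)) ^ 2 = I (n + 1) := Real.sq_sqrt hIn1
      have htq : Real.sqrt (I n) ^ 2 = I n := Real.sq_sqrt hIn
      have hstep1 : β * Real.sqrt (I (n + 1)) ≤ γ := by
        by_contra h
        push_neg at h
        have hspos : 0 < β * Real.sqrt (I (n + 1)) := lt_trans hγ h
        nlinarith [mul_le_mul_of_nonneg_left hrecn (le_of_lt (pow_pos hβ 2)),
          mul_lt_mul_of_pos_right hτβ (sub_pos.mpr h),
          mul_le_mul ih1 ih1 (by positivity) hγ.le,
          mul_lt_mul_of_pos_right h hspos]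
      refine ⟨hstep1, ?_⟩
      have hle0 : I (n + 1) ≤ I n := by nlinarith
      have hnn : (0:ℝ) ≤ (n : ℝ) * τ * (γ - β * Real.sqrt (I 0)) := by positivity
      have hInI0 : I (n + 1) ≤ I 0 := by linarith
      have hsle : Real.sqrt (I (n + 1)) ≤ Real.sqrt (I 0) := Real.sqrt_le_sqrt hInI0
      have hmul : τ * β * Real.sqrt (I (n + 1)) ≤ τ * β * Real.sqrt (I 0) :=
        mul_le_mul_of_nonneg_left hsle (by positivity)
      have hstep2 : I (n + 1) ≤ I n - τ * (γ - β * Real.sqrt (I 0)) := by nlinarith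
      push_cast
      linarith
  refine ⟨fun k hk => (key k hk).1, fun k hk => (key k hk).2, fun hlt => ?_⟩
  have hpos : 0 < τ * (γ - β * Real.sqrt (I 0)) := by
    have : 0 < γ - β * Real.sqrt (I 0) := by linarith
    positivity
  have hN := (key N le_rfl).2
  have hIN := hInn N le_rfl
  rw [le_div_iff₀ hpos]
  nlinarith
end

section
/- For α ≥ 0 and r > 0 set g_α(r) = ∫₀^∞ exp(−s − α r²/(4s)) ds. Then 0 ≤ 1 − g_α(r) ≤ 1 for all α ≥ 0 and r > 0, and there exists a finite constant K > 0, independent of α, such that for every α > 0 and every r > 0 with √α · r < 1 one has 1 − g_α(r) ≤ K √α r. Consequently, 1 − g_α(r) ≤ max{1, K} √α r for all α > 0 and r > 0. -/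
open MeasureTheory Real

noncomputable section

/-- `g_α(r) = ∫₀^∞ exp(−s − α r²/(4s)) ds`. -/
def gfun (α r : ℝ) : ℝ := ∫ s in Set.Ioi (0:ℝ), Real.exp (-s - α * r ^ 2 / (4 * s))

lemma one_sub_exp_neg_le_sqrt {x : ℝ} (hx : 0 ≤ x) : 1 - Real.exp (-x) ≤ Real.sqrt x := by
  rcases le_total x 1 with h | h
  · have h1 : 1 - Real.exp (-x) ≤ x := by nlinarith [Real.add_one_le_exp (-x)]
    have h2 : x ≤ Real.sqrt x := by
      nlinarith [Real.sq_sqrt hx, Real.sqrt_nonneg x]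
    linarith
  · have h1 : 1 - Real.exp (-x) ≤ 1 := by
      have := Real.exp_pos (-x); linarith
    have h2 : (1:ℝ) ≤ Real.sqrt x := by
      rw [show (1:ℝ) = Real.sqrt 1 by simp]
      exact Real.sqrt_le_sqrt h
    linarith

set_option maxHeartbeats 800000 in
lemma integrableOn_gint (c : ℝ) (hc : 0 ≤ c) :
    IntegrableOn (fun s => Real.exp (-s - c / s)) (Set.Ioi (0:ℝ)) := by
  have hmeas : AEStronglyMeasurable (fun s : ℝ => Real.exp (-s - c / s))
      (volume.restrict (Set.Ioi (0:ℝ))) := by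
    apply Measurable.aestronglyMeasurable
    exact (measurable_id.neg.sub (measurable_const.div measurable_id)).exp
  have hint : IntegrableOn (fun s : ℝ => Real.exp (-s)) (Set.Ioi (0:ℝ)) := by
    simpa using exp_neg_integrableOn_Ioi 0 one_pos
  refine MeasureTheory.Integrable.mono hint hmeas ?_
  filter_upwards [ae_restrict_mem measurableSet_Ioi] with s hs
  simp only [Real.norm_eq_abs, abs_of_pos (Real.exp_pos _)]
  apply Real.exp_le_exp.2
  have : 0 ≤ c / s := div_nonneg hc (le_of_lt hs)
  linarith

lemma gfun_eq (α r : ℝ) :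
    gfun α r = ∫ s in Set.Ioi (0:ℝ), Real.exp (-s - (α * r ^ 2 / 4) / s) := by
  unfold gfun
  congr 1
  ext s
  rw [div_div]

lemma key_bound (α r : ℝ) (hα : 0 ≤ α) (hr : 0 < r) :
    1 - gfun α r ≤ Real.sqrt α * r := by
  set c := α * r ^ 2 / 4 with hcdef
  have hc0 : 0 ≤ c := by positivity
  have hg := gfun_eq α r
  have hint1 : IntegrableOn (fun s : ℝ => Real.exp (-s)) (Set.Ioi (0:ℝ)) := by
    simpa using exp_neg_integrableOn_Ioi 0 one_pos
  have hint2 := integrableOn_gint c hc0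
  -- integrability of the Gamma(1/2) integrand
  have hGamma : IntegrableOn (fun x : ℝ => Real.exp (-x) * x ^ ((-1 : ℝ)/2)) (Set.Ioi 0) := by
    have h := Real.GammaIntegral_convergent (s := 1/2) (by norm_num)
    rw [show (1/2 - 1 : ℝ) = -1/2 by norm_num] at h
    exact h
  have hint3 : IntegrableOn
      (fun s : ℝ => Real.sqrt c * (Real.exp (-s) * s ^ ((-1 : ℝ)/2))) (Set.Ioi 0) :=
    hGamma.const_mul _
  have h1 : (∫ s in Set.Ioi (0:ℝ), Real.exp (-s)) = 1 := integral_exp_neg_Ioi_zero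
  have hsub : 1 - gfun α r
      = ∫ s in Set.Ioi (0:ℝ), (Real.exp (-s) - Real.exp (-s - c / s)) := by
    rw [MeasureTheory.integral_sub hint1 hint2, h1, hg]
  rw [hsub]
  have hmono : (∫ s in Set.Ioi (0:ℝ), (Real.exp (-s) - Real.exp (-s - c / s)))
      ≤ ∫ s in Set.Ioi (0:ℝ), Real.sqrt c * (Real.exp (-s) * s ^ ((-1 : ℝ)/2)) := by
    refine setIntegral_mono_on (hint1.sub hint2) hint3 measurableSet_Ioi ?_
    intro s hs
    have hs0 : 0 < s := hs
    have hcs : 0 ≤ c / s := div_nonneg hc0 hs0.le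
    have hexp : Real.exp (-s - c / s) = Real.exp (-s) * Real.exp (-(c / s)) := by
      rw [← Real.exp_add]; ring_nf
    have hfac : Real.exp (-s) - Real.exp (-s - c / s)
        = Real.exp (-s) * (1 - Real.exp (-(c / s))) := by
      rw [hexp]; ring
    rw [hfac]
    have hb := one_sub_exp_neg_le_sqrt hcs
    have hsq : Real.sqrt (c / s) = Real.sqrt c * s ^ ((-1 : ℝ)/2) := by
      rw [Real.sqrt_div hc0, show ((-1:ℝ)/2) = -(1/2) by norm_num,
        Real.rpow_neg hs0.le, ← Real.sqrt_eq_rpow, div_eq_mul_inv]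
    calc Real.exp (-s) * (1 - Real.exp (-(c / s)))
        ≤ Real.exp (-s) * Real.sqrt (c / s) :=
          mul_le_mul_of_nonneg_left hb (Real.exp_pos _).le
      _ = Real.sqrt c * (Real.exp (-s) * s ^ ((-1 : ℝ)/2)) := by rw [hsq]; ring
  have hval : (∫ s in Set.Ioi (0:ℝ), Real.exp (-s) * s ^ ((-1 : ℝ)/2)) = Real.sqrt π := by
    have h := Real.Gamma_eq_integral (s := 1/2) (by norm_num)
    rw [show (1/2 - 1 : ℝ) = (-1 : ℝ)/2 by norm_num] at h
    rw [← h, Real.Gamma_one_half_eq]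
  have hval2 : (∫ s in Set.Ioi (0:ℝ), Real.sqrt c * (Real.exp (-s) * s ^ ((-1 : ℝ)/2)))
      = Real.sqrt c * Real.sqrt π := by
    rw [MeasureTheory.integral_const_mul, hval]
  have hsqc : Real.sqrt c = Real.sqrt α * r / 2 := by
    have hcsq : c = (Real.sqrt α * r / 2) ^ 2 := by
      rw [hcdef]
      have := Real.sq_sqrt hα
      nlinarith
    rw [hcsq, Real.sqrt_sq (by positivity)]
  have hpi : Real.sqrt π ≤ 2 := by
    have h4 : Real.sqrt 4 = 2 := by
      rw [show (4:ℝ) = 2 ^ 2 by norm_num, Real.sqrt_sq (by norm_num)]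
    calc Real.sqrt π ≤ Real.sqrt 4 := Real.sqrt_le_sqrt (by linarith [Real.pi_le_four])
      _ = 2 := h4
  have hnn : 0 ≤ Real.sqrt α * r / 2 := by positivity
  calc (∫ s in Set.Ioi (0:ℝ), (Real.exp (-s) - Real.exp (-s - c / s)))
      ≤ Real.sqrt c * Real.sqrt π := by rw [← hval2]; exact hmono
    _ = (Real.sqrt α * r / 2) * Real.sqrt π := by rw [hsqc]
    _ ≤ (Real.sqrt α * r / 2) * 2 := mul_le_mul_of_nonneg_left hpi hnn
    _ = Real.sqrt α * r := by ring

/-- bounds for `1 − g_α(r)`: it lies in `[0,1]`, and there is a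
finite constant `K > 0`, independent of `α`, with `1 − g_α(r) ≤ K√α r` whenever
`√α r < 1`; consequently `1 − g_α(r) ≤ max{1, K}√α r` for all `α, r > 0`. -/
theorem one_sub_gfun_bounds :
    (∀ α r : ℝ, 0 ≤ α → 0 < r → 0 ≤ 1 - gfun α r ∧ 1 - gfun α r ≤ 1) ∧
    ∃ K : ℝ, 0 < K ∧
      (∀ α r : ℝ, 0 < α → 0 < r → Real.sqrt α * r < 1 →
        1 - gfun α r ≤ K * (Real.sqrt α * r)) ∧
      (∀ α r : ℝ, 0 < α → 0 < r →
        1 - gfun α r ≤ max 1 K * (Real.sqrt α * r)) := by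
  constructor
  · intro α r hα hr
    constructor
    · -- gfun ≤ 1
      have hint1 : IntegrableOn (fun s : ℝ => Real.exp (-s)) (Set.Ioi (0:ℝ)) := by
        simpa using exp_neg_integrableOn_Ioi 0 one_pos
      have hc0 : 0 ≤ α * r ^ 2 / 4 := by positivity
      have hint2 := integrableOn_gint (α * r ^ 2 / 4) hc0
      have hle : gfun α r ≤ ∫ s in Set.Ioi (0:ℝ), Real.exp (-s) := by
        rw [gfun_eq]
        refine setIntegral_mono_on hint2 hint1 measurableSet_Ioi ?_
        intro s hs
        have : 0 ≤ (α * r ^ 2 / 4) / s := div_nonneg hc0 (le_of_lt hs)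
        exact Real.exp_le_exp.2 (by linarith)
      rw [integral_exp_neg_Ioi_zero] at hle
      linarith
    · -- gfun ≥ 0
      have : 0 ≤ gfun α r := by
        unfold gfun
        exact setIntegral_nonneg measurableSet_Ioi fun s _ => (Real.exp_pos _).le
      linarith
  · refine ⟨1, one_pos, ?_, ?_⟩
    · intro α r hα hr _
      simpa using key_bound α r hα.le hr
    · intro α r hα hr
      simpa using key_bound α r hα.le hr
end
end
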